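/- arXiv:math/0608432 — 2 statements merged into one kernel-verified Lean document; each statement's English description precedes it below -/
import Mathlib

section
/- Let σ : Σ → Σ be a subshift of finite type and φ : Σ → ℚ^n a locally constant function. Given r ∈ φ_*(M_σ) ∩ ℚ^n, if the fiber φ_*^{-1}(r) contains an ergodic measure with respect to which φ is joint recurrent, then φ_*^{-1}(r) also contains a periodic probability measure. -/
open MeasureTheory Filter Topology Set

/-- The left shift on the full shift space `{1,…,N}^ℕ`. -/
def Shift {N : ℕ} : (ℕ → Fin N) → (ℕ → Fin N) := fun x i => x (i + 1)

/-- `S` is a subshift of finite type: it is the set of sequences all of whose transitions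
are allowed by some transition relation `M`. -/
def IsSubshiftFT {N : ℕ} (S : Set (ℕ → Fin N)) : Prop :=
  ∃ M : Fin N → Fin N → Prop, S = {x | ∀ i, M (x i) (x (i + 1))}

/-- The Birkhoff sum `S_k f` for the shift. -/
def birkhoff {N : ℕ} {E : Type*} [AddCommMonoid E] (k : ℕ) (f : (ℕ → Fin N) → E)
    (x : ℕ → Fin N) : E :=
  ∑ j ∈ Finset.range k, f (Shift^[j] x)

open Classical in
/-- The metric `d(x,y) = λ^{min{j : x_j ≠ y_j}}` on the shift space. -/
noncomputable def sdist {N : ℕ} (lam : ℝ) (x y : ℕ → Fin N) : ℝ :=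
  if x = y then 0 else lam ^ sInf {j | x j ≠ y j}

/-- `f` is a Walters function on `S` (for the metric with parameter `λ`): there is
`H : ℝ₊ → ℝ₊ ∪ {+∞}` increasing, null and continuous at zero, such that `d_k(x,y) ≤ s`
implies `|S_k f(x) - S_k f(y)| ≤ H(s)`. -/
def IsWalters {N : ℕ} (S : Set (ℕ → Fin N)) (lam : ℝ) (f : (ℕ → Fin N) → ℝ) : Prop :=
  ∃ H : ℝ → ENNReal, Monotone H ∧ H 0 = 0 ∧ Tendsto H (nhdsWithin 0 (Ioi 0)) (nhds 0) ∧
    ∀ s : ℝ, 0 ≤ s → ∀ k : ℕ, 0 < k → ∀ x ∈ S, ∀ y ∈ S,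
      (∀ j < k, sdist lam (Shift^[j] x) (Shift^[j] y) ≤ s) →
      ENNReal.ofReal |birkhoff k f x - birkhoff k f y| ≤ H s

/-- A function on the shift space is locally constant if it depends on finitely many
coordinates. -/
def LocallyConstantFn {N : ℕ} {E : Type*} (f : (ℕ → Fin N) → E) : Prop :=
  ∃ j : ℕ, ∀ x y : ℕ → Fin N, (∀ i ≤ j, x i = y i) → f x = f y

/-- The set `M_σ` of shift-invariant Borel probability measures giving full mass to the
subshift `S`. -/
def MS {N : ℕ} (S : Set (ℕ → Fin N)) : Set (ProbabilityMeasure (ℕ → Fin N)) :=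
  {μ | (μ : Measure (ℕ → Fin N)).map Shift = (μ : Measure (ℕ → Fin N)) ∧
    (μ : Measure (ℕ → Fin N)) S = 1}

/-- `μ` is a periodic probability measure of the subshift `S`: the uniform probability
measure on the orbit of a periodic point of `S`. -/
def IsPeriodicMeasure {N : ℕ} (S : Set (ℕ → Fin N)) (μ : ProbabilityMeasure (ℕ → Fin N)) :
    Prop :=
  ∃ z ∈ S, ∃ M : ℕ, 0 < M ∧ Shift^[M] z = z ∧
    (μ : Measure (ℕ → Fin N)) =
      (M : ENNReal)⁻¹ • ∑ j ∈ Finset.range M, Measure.dirac (Shift^[j] z)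

/-- `f` is joint recurrent with respect to the measure `ν`: for every measurable `D`,
`ν(Ξ(D)) = ν(D)`, where `Ξ(D)` is the set of `z ∈ D` such that for every `ε > 0` there is
`L > 0` with `σ^L(z) ∈ D` and `‖S_L f(z) - L f_*(ν)‖ < ε`. -/
def JointRec {N n : ℕ} (f : (ℕ → Fin N) → EuclideanSpace ℝ (Fin n))
    (ν : Measure (ℕ → Fin N)) : Prop :=
  ∀ D : Set (ℕ → Fin N), MeasurableSet D →
    ν {z ∈ D | ∀ ε > 0, ∃ L : ℕ, 0 < L ∧ Shift^[L] z ∈ D ∧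
      ‖birkhoff L f z - (L : ℝ) • ∫ x, f x ∂ν‖ < ε} = ν D

/- ---------- auxiliary lemmas ---------- -/

lemma shift_iterate_apply {N : ℕ} (m : ℕ) (x : ℕ → Fin N) (i : ℕ) :
    Shift^[m] x i = x (i + m) := by
  induction m generalizing x i with
  | zero => rfl
  | succ m ih =>
      rw [Function.iterate_succ_apply, ih]
      rfl

lemma shift_measurable {N : ℕ} : Measurable (Shift (N := N)) :=
  measurable_pi_lambda _ fun i => measurable_pi_apply (i + 1)

lemma coord_abs_le_norm {n : ℕ} (v : EuclideanSpace ℝ (Fin n)) (i : Fin n) :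
    |v i| ≤ ‖v‖ := by
  rw [EuclideanSpace.norm_eq]
  have h1 : |v i| = Real.sqrt (‖v i‖ ^ 2) := by
    rw [Real.sqrt_sq_eq_abs, Real.norm_eq_abs, abs_abs]
  rw [h1]
  apply Real.sqrt_le_sqrt
  exact Finset.single_le_sum (f := fun k => ‖v k‖ ^ 2)
    (fun k _ => by positivity) (Finset.mem_univ i)

lemma map_finset_sum_measure {α β : Type*} [MeasurableSpace α] [MeasurableSpace β]
    {f : α → β} (hf : Measurable f) (s : Finset ℕ) (μ : ℕ → Measure α) :
    (∑ m ∈ s, μ m).map f = ∑ m ∈ s, (μ m).map f := by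
  classical
  induction s using Finset.induction with
  | empty => simp [Measure.map_zero]
  | insert _ _ hm ih =>
      rw [Finset.sum_insert hm, Finset.sum_insert hm, Measure.map_add _ _ hf, ih]

lemma cycle_sum {M : Type*} [AddCommMonoid M] (h : ℕ → M) (L : ℕ)
    (hh : h L = h 0) :
    ∑ m ∈ Finset.range L, h (m + 1) = ∑ m ∈ Finset.range L, h m := by
  cases L with
  | zero => simp
  | succ K =>
      rw [Finset.sum_range_succ, hh, Finset.sum_range_succ' (fun m => h m) K]

/-- on a subshift of finite type, if `φ` is locally constant with rational
values, `r ∈ φ_*(M_σ) ∩ ℚ^n`, and the fiber `φ_*^{-1}(r)` contains an ergodic measure with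
respect to which `φ` is joint recurrent, then the fiber also contains a periodic probability
measure. -/
theorem stmt14 {N n : ℕ} (S : Set (ℕ → Fin N)) (hS : IsSubshiftFT S)
    (φ : (ℕ → Fin N) → EuclideanSpace ℝ (Fin n)) (hφm : Measurable φ)
    (hφlc : LocallyConstantFn φ) (hφQ : ∀ x i, ∃ q : ℚ, φ x i = (q : ℝ))
    (r : EuclideanSpace ℝ (Fin n)) (hrQ : ∀ i, ∃ q : ℚ, r i = (q : ℝ))
    (ν : ProbabilityMeasure (ℕ → Fin N)) (hν : ν ∈ MS S)
    (hνerg : Ergodic Shift (ν : Measure (ℕ → Fin N)))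
    (hνr : ∫ x, φ x ∂(ν : Measure (ℕ → Fin N)) = r)
    (hjr : JointRec φ (ν : Measure (ℕ → Fin N))) :
    ∃ μ : ProbabilityMeasure (ℕ → Fin N), μ ∈ MS S ∧ IsPeriodicMeasure S μ ∧
      ∫ x, φ x ∂(μ : Measure (ℕ → Fin N)) = r := by
  classical
  obtain ⟨j, hj⟩ := hφlc
  obtain ⟨Mtr, hMtr⟩ := hS
  -- S is measurable
  have hSmeas : MeasurableSet S := by
    have : S = ⋂ i : ℕ, (fun x : ℕ → Fin N => (x i, x (i + 1))) ⁻¹' {p | Mtr p.1 p.2} := by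
      rw [hMtr]; ext x; simp
    rw [this]
    exact MeasurableSet.iInter fun i =>
      ((measurable_pi_apply i).prod (measurable_pi_apply (i + 1)))
        ((Set.to_countable _).measurableSet)
  -- S is shift invariant
  have hSinv : ∀ x ∈ S, Shift x ∈ S := by
    intro x hx
    rw [hMtr] at hx ⊢
    intro i
    exact hx (i + 1)
  have hSinv' : ∀ (m : ℕ), ∀ x ∈ S, Shift^[m] x ∈ S := by
    intro m
    induction m with
    | zero => intro x hx; exact hx
    | succ m ih =>
        intro x hx
        rw [Function.iterate_succ_apply']
        exact hSinv _ (ih x hx)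
  -- the restriction map and cylinders
  set ρ : (ℕ → Fin N) → (Fin (j + 1) → Fin N) := fun x i => x i with hρ
  have hρmeas : Measurable ρ := measurable_pi_lambda _ fun i => measurable_pi_apply _
  -- a common denominator
  set ext : (Fin (j + 1) → Fin N) → (ℕ → Fin N) :=
    fun b i => b ⟨min i j, by omega⟩ with hext
  have hφext : ∀ x, φ (ext (ρ x)) = φ x := by
    intro x
    apply hj
    intro i hi
    simp only [hext, hρ]
    congr 1
    simp [Nat.min_eq_left hi]
  set qφ : (Fin (j + 1) → Fin N) → Fin n → ℚ :=
    fun b i => Classical.choose (hφQ (ext b) i) with hqφ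
  have hqφspec : ∀ b i, φ (ext b) i = (qφ b i : ℝ) :=
    fun b i => Classical.choose_spec (hφQ (ext b) i)
  set qr : Fin n → ℚ := fun i => Classical.choose (hrQ i) with hqr
  have hqrspec : ∀ i, r i = (qr i : ℝ) := fun i => Classical.choose_spec (hrQ i)
  set D0 : ℕ :=
    (∏ b : Fin (j + 1) → Fin N, ∏ i : Fin n, (qφ b i).den) * ∏ i : Fin n, (qr i).den
    with hD0
  have hD0pos : 0 < D0 := by
    apply Nat.mul_pos
    · exact Finset.prod_pos fun b _ => Finset.prod_pos fun i _ => (qφ b i).den_pos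
    · exact Finset.prod_pos fun i _ => (qr i).den_pos
  have hdvdφ : ∀ b i, ((qφ b i).den : ℤ) ∣ (D0 : ℤ) := by
    intro b i
    have h1 : (qφ b i).den ∣ ∏ i : Fin n, (qφ b i).den :=
      Finset.dvd_prod_of_mem _ (Finset.mem_univ i)
    have h2 : (∏ i : Fin n, (qφ b i).den) ∣
        ∏ b : Fin (j + 1) → Fin N, ∏ i : Fin n, (qφ b i).den :=
      Finset.dvd_prod_of_mem _ (Finset.mem_univ b)
    exact Int.natCast_dvd_natCast.2 ((h1.trans h2).mul_right _)
  have hdvdr : ∀ i, ((qr i).den : ℤ) ∣ (D0 : ℤ) := by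
    intro i
    exact Int.natCast_dvd_natCast.2
      ((Finset.dvd_prod_of_mem _ (Finset.mem_univ i)).mul_left _)
  -- the lattice predicate
  set P : ℝ → Prop := fun x => ∃ m : ℤ, x * (D0 : ℝ) = (m : ℝ) with hP
  have hPrat : ∀ q : ℚ, ((q.den : ℤ) ∣ (D0 : ℤ)) → P (q : ℝ) := by
    intro q hq
    obtain ⟨c, hc⟩ := hq
    refine ⟨q.num * c, ?_⟩
    have hden : (q.den : ℝ) ≠ 0 := by positivity
    have hD0R : (D0 : ℝ) = (q.den : ℝ) * (c : ℝ) := by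
      have := congrArg (fun z : ℤ => (z : ℝ)) hc
      push_cast at this ⊢
      linarith [this]
    rw [Rat.cast_def, hD0R]
    push_cast
    field_simp
  have hPsub : ∀ a b : ℝ, P a → P b → P (a - b) := by
    rintro a b ⟨ma, hma⟩ ⟨mb, hmb⟩
    exact ⟨ma - mb, by push_cast; rw [sub_mul, hma, hmb]⟩
  have hPsum : ∀ (L : ℕ) (f : ℕ → ℝ), (∀ m < L, P (f m)) →
      P (∑ m ∈ Finset.range L, f m) := by
    intro L
    induction L with
    | zero => intro f _; exact ⟨0, by simp⟩
    | succ L ih =>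
        intro f hf
        rw [Finset.sum_range_succ]
        obtain ⟨ma, hma⟩ := ih f fun m hm => hf m (by omega)
        obtain ⟨mb, hmb⟩ := hf L (by omega)
        exact ⟨ma + mb, by push_cast; rw [add_mul, hma, hmb]⟩
  have hPnat : ∀ (L : ℕ) (a : ℝ), P a → P ((L : ℝ) * a) := by
    rintro L a ⟨m, hm⟩
    exact ⟨L * m, by push_cast; rw [mul_assoc, hm]⟩
  -- a cylinder of positive measure
  have hcyl : ∃ a : Fin (j + 1) → Fin N,
      (ν : Measure (ℕ → Fin N)) (S ∩ ρ ⁻¹' {a}) ≠ 0 := by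
    by_contra hcon
    push_neg at hcon
    have hcov : S ⊆ ⋃ a : Fin (j + 1) → Fin N, S ∩ ρ ⁻¹' {a} := by
      intro x hx
      exact mem_iUnion.2 ⟨ρ x, hx, rfl⟩
    have h0 : (ν : Measure (ℕ → Fin N)) S = 0 := by
      refine le_antisymm ?_ (zero_le)
      calc (ν : Measure (ℕ → Fin N)) S
          ≤ (ν : Measure (ℕ → Fin N)) (⋃ a : Fin (j + 1) → Fin N, S ∩ ρ ⁻¹' {a}) :=
            measure_mono hcov
        _ ≤ ∑' a : Fin (j + 1) → Fin N, (ν : Measure (ℕ → Fin N)) (S ∩ ρ ⁻¹' {a}) :=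
            measure_iUnion_le _
        _ = 0 := by simp [hcon]
    rw [hν.2] at h0
    exact one_ne_zero h0
  obtain ⟨a, ha⟩ := hcyl
  set D : Set (ℕ → Fin N) := S ∩ ρ ⁻¹' {a} with hDdef
  have hDmeas : MeasurableSet D :=
    hSmeas.inter (hρmeas (MeasurableSet.singleton a))
  -- joint recurrence gives a recurrent point
  have hΞ := hjr D hDmeas
  have hΞne : {z ∈ D | ∀ ε > 0, ∃ L : ℕ, 0 < L ∧ Shift^[L] z ∈ D ∧
      ‖birkhoff L φ z - (L : ℝ) • ∫ x, φ x ∂(ν : Measure (ℕ → Fin N))‖ < ε}.Nonempty := by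
    apply nonempty_of_measure_ne_zero (μ := (ν : Measure (ℕ → Fin N)))
    rw [hΞ]
    exact ha
  obtain ⟨z, hzD, hzrec⟩ := hΞne
  have hεpos : (0 : ℝ) < ((D0 : ℝ))⁻¹ := by positivity
  obtain ⟨L, hLpos, hzLD, hznorm⟩ := hzrec ((D0 : ℝ))⁻¹ hεpos
  rw [hνr] at hznorm
  have hzS : z ∈ S := hzD.1
  have hzcylρ : ρ z = a := hzD.2
  have hzLcylρ : ρ (Shift^[L] z) = a := hzLD.2
  -- exact periodicity of coordinates
  have hzper : ∀ i ≤ j, z (L + i) = z i := by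
    intro i hi
    have h1 : Shift^[L] z i = a ⟨i, by omega⟩ := by
      have := congrFun hzLcylρ ⟨i, by omega⟩
      exact this
    have h2 : z i = a ⟨i, by omega⟩ := congrFun hzcylρ ⟨i, by omega⟩
    rw [shift_iterate_apply] at h1
    rw [show L + i = i + L by omega]
    rw [h1, h2]
  -- the Birkhoff sum equals L • r exactly
  have hexact : birkhoff L φ z = (L : ℝ) • r := by
    have hPv : ∀ i : Fin n, P ((birkhoff L φ z - (L : ℝ) • r) i) := by
      intro i
      have hsub : (birkhoff L φ z - (L : ℝ) • r) i
          = (∑ m ∈ Finset.range L, φ (Shift^[m] z) i) - (L : ℝ) * r i := by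
        have h1 : (birkhoff L φ z) i = ∑ m ∈ Finset.range L, φ (Shift^[m] z) i := by
          unfold birkhoff
          rw [WithLp.ofLp_sum]
          exact Finset.sum_apply i _ _
        have h2 : (birkhoff L φ z - (L : ℝ) • r) i
            = (birkhoff L φ z) i - ((L : ℝ) • r) i := rfl
        rw [h2, h1]; rfl
      rw [hsub]
      apply hPsub
      · apply hPsum
        intro m _
        have : φ (Shift^[m] z) i = (qφ (ρ (Shift^[m] z)) i : ℝ) := by
          rw [← hφext (Shift^[m] z)]
          exact hqφspec _ i
        rw [this]
        exact hPrat _ (hdvdφ _ i)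
      · rw [hqrspec i]
        exact hPnat L _ (hPrat _ (hdvdr i))
    have hzero : ∀ i : Fin n, (birkhoff L φ z - (L : ℝ) • r) i = 0 := by
      intro i
      obtain ⟨m, hm⟩ := hPv i
      have habs : |(birkhoff L φ z - (L : ℝ) • r) i| < ((D0 : ℝ))⁻¹ :=
        lt_of_le_of_lt (coord_abs_le_norm _ i) hznorm
      have hD0ne : (D0 : ℝ) ≠ 0 := by positivity
      have hmabs : |(m : ℝ)| < 1 := by
        rw [← hm, abs_mul, abs_of_pos (by positivity : (0:ℝ) < (D0 : ℝ))]
        calc |(birkhoff L φ z - (L : ℝ) • r) i| * (D0 : ℝ)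
            < ((D0 : ℝ))⁻¹ * (D0 : ℝ) := by
              apply mul_lt_mul_of_pos_right habs
              positivity
          _ = 1 := inv_mul_cancel₀ hD0ne
      have hm0 : m = 0 := by
        have h' := hmabs
        rw [← Int.cast_abs] at h'
        have h'' : |m| < 1 := by exact_mod_cast h'
        have := abs_lt.1 h''
        omega
      rw [hm0] at hm
      have hD0ne : (D0 : ℝ) ≠ 0 := by positivity
      have := hm
      simp only [Int.cast_zero] at this
      exact (mul_eq_zero.1 this).resolve_right hD0ne
    have hsubzero : birkhoff L φ z - (L : ℝ) • r = 0 := by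
      ext i
      exact hzero i
    exact sub_eq_zero.1 hsubzero
  -- the periodic point
  set w : ℕ → Fin N := fun i => z (i % L) with hw
  have hzmod : ∀ i ≤ L + j, z i = z (i % L) := by
    intro i
    induction i using Nat.strong_induction_on with
    | _ i ih =>
      intro hi
      by_cases hiL : i < L
      · rw [Nat.mod_eq_of_lt hiL]
      · push_neg at hiL
        have hi' : i - L ≤ j := by omega
        have h3 : (i - L) % L = i % L := by
          conv_rhs => rw [show i = L + (i - L) by omega]
          rw [Nat.add_mod_left]
        calc z i = z (L + (i - L)) := by congr 1; omega
          _ = z (i - L) := hzper _ hi'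
          _ = z ((i - L) % L) := ih (i - L) (by omega) (by omega)
          _ = z (i % L) := by rw [h3]
  have hwz : ∀ i ≤ L + j, w i = z i := fun i hi => (hzmod i hi).symm
  have hwper : Shift^[L] w = w := by
    funext i
    rw [shift_iterate_apply]
    show z ((i + L) % L) = z (i % L)
    rw [Nat.add_mod_right]
  have hzL0 : z L = z 0 := by
    have := hzper 0 (Nat.zero_le j)
    simpa using this
  have hwS : w ∈ S := by
    rw [hMtr]
    intro i
    have hzS' : ∀ k, Mtr (z k) (z (k + 1)) := by
      rw [hMtr] at hzS
      exact hzS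
    have hk : i % L < L := Nat.mod_lt _ hLpos
    have hmod : (i + 1) % L = (i % L + 1) % L := by
      have h := Nat.div_add_mod i L
      calc (i + 1) % L = (L * (i / L) + (i % L + 1)) % L := by congr 1; omega
        _ = (i % L + 1) % L := Nat.mul_add_mod _ _ _
    show Mtr (z (i % L)) (z ((i + 1) % L))
    rw [hmod]
    by_cases hkL : i % L + 1 = L
    · rw [hkL, Nat.mod_self]
      have h5 := hzS' (i % L)
      rw [hkL, hzL0] at h5
      exact h5
    · rw [Nat.mod_eq_of_lt (show i % L + 1 < L by omega)]
      exact hzS' _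
  have hbw : birkhoff L φ w = birkhoff L φ z := by
    unfold birkhoff
    refine Finset.sum_congr rfl fun m hm => ?_
    have hm' : m < L := Finset.mem_range.1 hm
    apply hj
    intro i hi
    rw [shift_iterate_apply, shift_iterate_apply]
    exact hwz (i + m) (by omega)
  -- the periodic measure
  set μ0 : Measure (ℕ → Fin N) :=
    ((L : ENNReal))⁻¹ • ∑ m ∈ Finset.range L, Measure.dirac (Shift^[m] w) with hμ0
  have hLne : (L : ENNReal) ≠ 0 := by exact_mod_cast hLpos.ne'
  have hLnetop : (L : ENNReal) ≠ ⊤ := ENNReal.natCast_ne_top L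
  have hμ0univ : IsProbabilityMeasure μ0 := by
    constructor
    rw [hμ0, Measure.smul_apply, Measure.finset_sum_apply]
    simp only [measure_univ]
    rw [Finset.sum_const, Finset.card_range, nsmul_eq_mul, mul_one, smul_eq_mul]
    exact ENNReal.inv_mul_cancel hLne hLnetop
  have hmap : μ0.map Shift = μ0 := by
    rw [hμ0, Measure.map_smul, map_finset_sum_measure shift_measurable]
    congr 1
    calc ∑ m ∈ Finset.range L, (Measure.dirac (Shift^[m] w)).map Shift
        = ∑ m ∈ Finset.range L, Measure.dirac (Shift^[m + 1] w) :=
          Finset.sum_congr rfl fun m _ => by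
            rw [Measure.map_dirac' shift_measurable, Function.iterate_succ_apply']
      _ = ∑ m ∈ Finset.range L, Measure.dirac (Shift^[m] w) :=
          cycle_sum (fun m => Measure.dirac (Shift^[m] w)) L (by simp [hwper])
  have hwSm : ∀ m, Shift^[m] w ∈ S := fun m => hSinv' m w hwS
  have hμ0S : μ0 S = 1 := by
    rw [hμ0, Measure.smul_apply, Measure.finset_sum_apply]
    have hd : ∀ m ∈ Finset.range L, Measure.dirac (Shift^[m] w) S = 1 := by
      intro m _
      rw [Measure.dirac_apply' _ hSmeas, Set.indicator_of_mem (hwSm m)]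
      rfl
    rw [Finset.sum_congr rfl hd, Finset.sum_const, Finset.card_range, nsmul_eq_mul,
      mul_one, smul_eq_mul]
    exact ENNReal.inv_mul_cancel hLne hLnetop
  have hint : ∫ x, φ x ∂μ0 = r := by
    have hintd : ∀ m : ℕ, Integrable φ (Measure.dirac (Shift^[m] w)) := by
      intro m
      constructor
      · exact hφm.stronglyMeasurable.aestronglyMeasurable
      · rw [HasFiniteIntegral, lintegral_dirac]
        exact ENNReal.coe_lt_top
    rw [hμ0, integral_smul_measure, integral_finset_sum_measure fun m _ => hintd m]
    have hbb : ∑ m ∈ Finset.range L, ∫ x, φ x ∂(Measure.dirac (Shift^[m] w))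
        = birkhoff L φ w := by
      unfold birkhoff
      exact Finset.sum_congr rfl fun m _ => integral_dirac φ _
    rw [hbb, hbw, hexact, ENNReal.toReal_inv, ENNReal.toReal_natCast, smul_smul,
      inv_mul_cancel₀ (by exact_mod_cast hLpos.ne' : (L : ℝ) ≠ 0), one_smul]
  exact ⟨⟨μ0, hμ0univ⟩, ⟨hmap, hμ0S⟩, ⟨w, hwS, L, hLpos, hwper, hμ0⟩, hint⟩
end

section
/- Let (X,T) be a transitive, expansive dynamical system on a compact metric space with a locally constant number of pre-images, and let {B_j} be a sequence of θ-Hölder functions converging in the θ-Hölder norm to a potential A. Then for each index j one can choose a sub-action v_j for the potential B_j in such a way that the sequence {v_j} is equicontinuous and uniformly bounded, and every uniform accumulation point of {v_j} is a sub-action for A. -/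
open MeasureTheory Filter Topology Metric Set
open scoped ENNReal NNReal

variable {X : Type*} [MetricSpace X] [CompactSpace X] [MeasurableSpace X] [BorelSpace X]

/-- The set of `T`-invariant Borel probability measures on `X`. -/
def MT (T : X → X) : Set (ProbabilityMeasure X) :=
  {μ | (μ : Measure X).map T = (μ : Measure X)}

/-- The integral of the potential `B` against a measure. -/
noncomputable def intA (B : X → ℝ) (μ : ProbabilityMeasure X) : ℝ :=
  ∫ x, B x ∂(μ : Measure X)

/-- The maximal ergodic average `β_B = max {∫B dμ : μ ∈ M_T}`. -/
noncomputable def betaConst (T : X → X) (B : X → ℝ) : ℝ :=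
  sSup (intA B '' MT T)

/-- `v` is a sub-action for the potential `B`: `B + v - v∘T ≤ β_B` pointwise. -/
def IsSubAction (T : X → X) (B v : X → ℝ) : Prop :=
  ∀ x : X, B x + v x - v (T x) ≤ betaConst T B

/-- Topological transitivity. -/
def TopTransitive (T : X → X) : Prop :=
  ∀ U V : Set X, IsOpen U → IsOpen V → U.Nonempty → V.Nonempty →
    ∃ k : ℕ, (U ∩ T^[k] ⁻¹' V).Nonempty

section Aux
set_option linter.unusedSectionVars false

lemma geom_aux {q : ℝ} (h0 : 0 ≤ q) (h1 : q < 1) (n : ℕ) :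
    ∑ i ∈ Finset.range n, q ^ (n - i) ≤ (1 - q)⁻¹ := by
  have h1q : 0 < 1 - q := by linarith
  have e1 : ∑ i ∈ Finset.range n, q ^ (n - i) = ∑ j ∈ Finset.range n, q ^ (j + 1) := by
    rw [← Finset.sum_range_reflect (fun j => q ^ (j + 1)) n]
    refine Finset.sum_congr rfl fun j hj => ?_
    have hj' : j < n := Finset.mem_range.mp hj
    congr 1
    omega
  have e2 : ∑ j ∈ Finset.range n, q ^ (j + 1) = q * ∑ j ∈ Finset.range n, q ^ j := by
    rw [Finset.mul_sum]
    exact Finset.sum_congr rfl fun j _ => by ring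
  rw [e1, e2]
  have hg : ∑ j ∈ Finset.range n, q ^ j ≤ (1 - q)⁻¹ := by
    rw [geom_sum_eq (ne_of_lt h1)]
    have key : (q ^ n - 1) / (q - 1) = (1 - q ^ n) * (1 - q)⁻¹ := by
      rw [div_eq_mul_inv, show q - 1 = -(1 - q) by ring, inv_neg]
      ring
    rw [key]
    have hqn0 : 0 ≤ q ^ n := pow_nonneg h0 n
    calc (1 - q ^ n) * (1 - q)⁻¹ ≤ 1 * (1 - q)⁻¹ := by
          apply mul_le_mul_of_nonneg_right (by linarith) (by positivity)
      _ = (1 - q)⁻¹ := one_mul _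
  calc q * ∑ j ∈ Finset.range n, q ^ j ≤ q * (1 - q)⁻¹ :=
        mul_le_mul_of_nonneg_left hg h0
    _ ≤ 1 * (1 - q)⁻¹ := mul_le_mul_of_nonneg_right h1.le (by positivity)
    _ = (1 - q)⁻¹ := one_mul _

lemma pow_rpow_aux {x : ℝ} (hx : 0 ≤ x) (θ : ℝ) (k : ℕ) :
    ((x ^ k : ℝ)) ^ θ = (x ^ θ) ^ k := by
  rw [← Real.rpow_natCast x k, ← Real.rpow_natCast (x ^ θ) k,
    ← Real.rpow_mul hx, ← Real.rpow_mul hx, mul_comm]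

variable {X : Type*} [MetricSpace X] [CompactSpace X] [MeasurableSpace X] [BorelSpace X]

noncomputable def birk (T : X → X) (B : X → ℝ) (n : ℕ) (y : X) : ℝ :=
  ∑ i ∈ Finset.range n, B (T^[i] y)

lemma shadow (T : X → X) (ζ κ : ℝ) (hκ : 1 < κ)
    (hexp : ∀ x y : X, dist x y < ζ → κ * dist x y ≤ dist (T x) (T y))
    (ξ : ℝ)
    (hpre : ∀ x' y' x : X, dist x' y' < ξ → T x = x' → ∃ y, T y = y' ∧ dist x y < ζ)
    (η : ℝ) (hηξ : η < ξ) :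
    ∀ (n : ℕ) (y w : X), dist (T^[n] y) w ≤ η →
      ∃ z, T^[n] z = w ∧ ∀ i, i ≤ n → dist (T^[i] z) (T^[i] y) ≤ κ⁻¹ ^ (n - i) * η := by
  have hκ0 : 0 < κ := by linarith
  have hκi : κ⁻¹ ≤ 1 := by
    rw [inv_le_one_iff₀]; right; exact hκ.le
  have hκi0 : 0 ≤ κ⁻¹ := by positivity
  intro n
  induction n with
  | zero =>
    intro y w hd
    exact ⟨w, rfl, fun i hi => by simpa [Nat.le_zero.mp hi, dist_comm] using hd⟩
  | succ n IH =>
    intro y w hd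
    have hη0 : 0 ≤ η := le_trans dist_nonneg hd
    have hd' : dist (T^[n] (T y)) w ≤ η := by
      rwa [← Function.iterate_succ_apply]
    obtain ⟨z₁, hz₁, hb₁⟩ := IH (T y) w hd'
    have hb₁0 : dist z₁ (T y) ≤ κ⁻¹ ^ n * η := by simpa using hb₁ 0 (Nat.zero_le n)
    have hlt : dist (T y) z₁ < ξ := by
      rw [dist_comm]
      calc dist z₁ (T y) ≤ κ⁻¹ ^ n * η := hb₁0
        _ ≤ 1 * η := by
            apply mul_le_mul_of_nonneg_right _ hη0
            exact pow_le_one₀ hκi0 hκi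
        _ = η := one_mul _
        _ < ξ := hηξ
    obtain ⟨z, hz, hzζ⟩ := hpre (T y) z₁ y hlt rfl
    have hexpz : κ * dist y z ≤ dist (T y) (T z) := hexp y z hzζ
    have hb₁0' : dist (T y) z₁ ≤ κ⁻¹ ^ n * η := by rw [dist_comm]; exact hb₁0
    have hdz : dist y z ≤ κ⁻¹ ^ (n + 1) * η := by
      rw [hz] at hexpz
      have h2 := mul_le_mul_of_nonneg_left hexpz hκi0
      rw [← mul_assoc, inv_mul_cancel₀ (ne_of_gt hκ0), one_mul] at h2
      calc dist y z ≤ κ⁻¹ * dist (T y) z₁ := h2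
        _ ≤ κ⁻¹ * (κ⁻¹ ^ n * η) := mul_le_mul_of_nonneg_left hb₁0' hκi0
        _ = κ⁻¹ ^ (n + 1) * η := by ring
    refine ⟨z, ?_, ?_⟩
    · rw [Function.iterate_succ_apply, hz, hz₁]
    · intro i hi
      match i with
      | 0 => simpa [dist_comm] using hdz
      | (j+1) =>
        have hj : j ≤ n := Nat.succ_le_succ_iff.mp hi
        have := hb₁ j hj
        rw [Function.iterate_succ_apply, Function.iterate_succ_apply, hz]
        simpa [Nat.succ_sub_succ] using this

set_option linter.unusedSectionVars false

lemma ball_exp_one (T : X → X) (ζ κ ξ : ℝ) (hκ : 1 < κ)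
    (hexp : ∀ x y : X, dist x y < ζ → κ * dist x y ≤ dist (T x) (T y))
    (hpre : ∀ x' y' x : X, dist x' y' < ξ → T x = x' → ∃ y, T y = y' ∧ dist x y < ζ)
    (x : X) (r : ℝ) :
    ball (T x) (min (κ * r) ξ) ⊆ T '' ball x r := by
  intro y' hy'
  rw [mem_ball, dist_comm] at hy'
  obtain ⟨y, hTy, hyζ⟩ := hpre (T x) y' x (lt_of_lt_of_le hy' (min_le_right _ _)) rfl
  refine ⟨y, ?_, hTy⟩
  rw [mem_ball, dist_comm]
  have := hexp x y hyζ
  rw [hTy] at this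
  have hlt : κ * dist x y < κ * r :=
    lt_of_le_of_lt this (lt_of_lt_of_le hy' (min_le_left _ _))
  exact lt_of_mul_lt_mul_left hlt (by linarith)

lemma ball_exp (T : X → X) (ζ κ ξ : ℝ) (hκ : 1 < κ) (hξ : 0 < ξ)
    (hexp : ∀ x y : X, dist x y < ζ → κ * dist x y ≤ dist (T x) (T y))
    (hpre : ∀ x' y' x : X, dist x' y' < ξ → T x = x' → ∃ y, T y = y' ∧ dist x y < ζ) :
    ∀ (k : ℕ) (x : X) (r : ℝ), 0 < r →
      ball (T^[k] x) (min (κ ^ k * r) ξ) ⊆ T^[k] '' ball x r := by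
  have hκ0 : (0:ℝ) < κ := by linarith
  intro k
  induction k with
  | zero =>
    intro x r hr y' hy'
    refine ⟨y', ?_, rfl⟩
    simp only [pow_zero, one_mul] at hy'
    exact mem_ball.mpr (lt_of_lt_of_le (mem_ball.mp hy') (min_le_left _ _))
  | succ k IH =>
    intro x r hr y' hy'
    have hmin : 0 < min (κ * r) ξ := lt_min (by positivity) hξ
    have hge : min (κ ^ (k+1) * r) ξ ≤ min (κ ^ k * min (κ * r) ξ) ξ := by
      refine le_min ?_ (min_le_right _ _)
      rcases le_total (κ * r) ξ with h | h
      · rw [min_eq_left h]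
        refine (min_le_left _ _).trans (le_of_eq ?_)
        rw [pow_succ]; ring
      · rw [min_eq_right h]
        refine (min_le_right _ _).trans ?_
        calc ξ = 1 * ξ := (one_mul ξ).symm
          _ ≤ κ ^ k * ξ := by
              apply mul_le_mul_of_nonneg_right (one_le_pow₀ hκ.le) hξ.le
    have hy'' : y' ∈ ball (T^[k] (T x)) (min (κ ^ k * min (κ * r) ξ) ξ) := by
      rw [mem_ball] at hy' ⊢
      rw [Function.iterate_succ_apply] at hy'
      exact lt_of_lt_of_le hy' hge
    obtain ⟨u, hu, hTu⟩ := IH (T x) (min (κ * r) ξ) hmin hy''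
    obtain ⟨w, hw, hTw⟩ := ball_exp_one T ζ κ ξ hκ hexp hpre x r hu
    exact ⟨w, hw, by rw [Function.iterate_succ_apply, hTw, hTu]⟩

lemma uniform_return (T : X → X) (ζ κ ξ : ℝ) (hκ : 1 < κ) (hξ : 0 < ξ)
    (htrans : TopTransitive T)
    (hexp : ∀ x y : X, dist x y < ζ → κ * dist x y ≤ dist (T x) (T y))
    (hpre : ∀ x' y' x : X, dist x' y' < ξ → T x = x' → ∃ y, T y = y' ∧ dist x y < ζ)
    (r₀ : ℝ) (hr₀ : 0 < r₀) (hr₀ξ : 4 * r₀ < ξ) :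
    ∃ m₀ : ℕ, ∀ x x' : X, ∃ m ≤ m₀, ∃ w, T^[m] w = x' ∧ dist w x < 2 * r₀ := by
  obtain ⟨p₀, hp₀⟩ := pow_unbounded_of_one_lt (ξ / r₀) hκ
  have hp₀' : ξ < κ ^ p₀ * r₀ := by
    rw [div_lt_iff₀ hr₀] at hp₀; linarith
  -- finite cover
  obtain ⟨s, hs⟩ := IsCompact.elim_finite_subcover isCompact_univ
    (fun c : X => ball c r₀) (fun c => isOpen_ball)
    (fun x _ => mem_iUnion.mpr ⟨x, mem_ball_self hr₀⟩)
  -- transitivity choice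
  have hKex : ∀ a b : X, ∃ k : ℕ,
      (ball (T^[p₀] a) (ξ/2) ∩ T^[k] ⁻¹' ball b r₀).Nonempty := fun a b =>
    htrans _ _ isOpen_ball isOpen_ball
      ⟨T^[p₀] a, mem_ball_self (by linarith)⟩ ⟨b, mem_ball_self hr₀⟩
  set K : X → X → ℕ := fun a b => (hKex a b).choose with hK
  refine ⟨p₀ + s.sup (fun a => s.sup (fun b => K a b)), ?_⟩
  intro x x'
  obtain ⟨a, ha, hxa⟩ : ∃ a ∈ s, x ∈ ball a r₀ := by
    have := hs (mem_univ x); simpa using this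
  obtain ⟨b, hb, hxb⟩ : ∃ b ∈ s, x' ∈ ball b r₀ := by
    have := hs (mem_univ x'); simpa using this
  obtain ⟨z, hz1, hz2⟩ := (hKex a b).choose_spec
  set k := K a b with hkdef
  -- x' ∈ T^[k] '' ball z (ξ/2)
  have hx'mem : x' ∈ ball (T^[k] z) (min (κ ^ k * (ξ/2)) ξ) := by
    rw [mem_ball, dist_comm]
    have h1 : dist (T^[k] z) x' ≤ dist (T^[k] z) b + dist b x' := dist_triangle _ _ _
    have h2 : dist (T^[k] z) b < r₀ := mem_ball.mp hz2
    have h3 : dist b x' < r₀ := by rw [dist_comm]; exact mem_ball.mp hxb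
    have h4 : ξ/2 ≤ min (κ ^ k * (ξ/2)) ξ := by
      refine le_min ?_ (by linarith)
      calc ξ/2 = 1 * (ξ/2) := (one_mul _).symm
        _ ≤ κ ^ k * (ξ/2) := mul_le_mul_of_nonneg_right (one_le_pow₀ hκ.le) (by linarith)
    linarith
  obtain ⟨u, hu, hTu⟩ := ball_exp T ζ κ ξ hκ hξ hexp hpre k z (ξ/2) (by linarith) hx'mem
  -- u ∈ ball (T^[p₀] a) ξ ⊆ T^[p₀] '' ball a r₀
  have humem : u ∈ ball (T^[p₀] a) (min (κ ^ p₀ * r₀) ξ) := by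
    rw [mem_ball]
    have h1 : dist u (T^[p₀] a) ≤ dist u z + dist z (T^[p₀] a) := dist_triangle _ _ _
    have h2 : dist u z < ξ/2 := mem_ball.mp hu
    have h3 : dist z (T^[p₀] a) < ξ/2 := mem_ball.mp hz1
    rw [min_eq_right hp₀'.le]
    linarith
  obtain ⟨w, hw, hTw⟩ := ball_exp T ζ κ ξ hκ hξ hexp hpre p₀ a r₀ hr₀ humem
  refine ⟨k + p₀, ?_, w, ?_, ?_⟩
  · have hks : k ≤ s.sup (fun a => s.sup (fun b => K a b)) :=
      le_trans (Finset.le_sup (f := fun b => K a b) hb) (Finset.le_sup (f := fun a => s.sup (fun b => K a b)) ha)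
    omega
  · rw [Function.iterate_add_apply, hTw, hTu]
  · have h1 : dist w x ≤ dist w a + dist a x := dist_triangle _ _ _
    have h2 : dist w a < r₀ := mem_ball.mp hw
    have h3 : dist a x < r₀ := by rw [dist_comm]; exact mem_ball.mp hxa
    linarith

lemma closing (T : X → X) (ζ κ ξ : ℝ) (hζ : 0 < ζ) (hκ : 1 < κ) (hξ : 0 < ξ)
    (htrans : TopTransitive T)
    (hexp : ∀ x y : X, dist x y < ζ → κ * dist x y ≤ dist (T x) (T y))
    (hpre : ∀ x' y' x : X, dist x' y' < ξ → T x = x' → ∃ y, T y = y' ∧ dist x y < ζ) :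
    ∃ (η₀ : ℝ) (m₀ : ℕ), 0 < η₀ ∧ η₀ < ξ ∧
      ∀ n : ℕ, 1 ≤ n → ∀ y : X, ∃ (m : ℕ) (p : X), m ≤ m₀ ∧
        T^[m + n] p = p ∧ ∀ i < n, dist (T^[i] p) (T^[i] y) ≤ κ⁻¹ ^ (n - i) * η₀ := by
  have hκ0 : (0:ℝ) < κ := by linarith
  have hκi0 : (0:ℝ) ≤ κ⁻¹ := by positivity
  have hκi1 : κ⁻¹ < 1 := by rw [inv_lt_one_iff₀]; right; exact hκ
  set δ₀ : ℝ := min ξ ζ with hδ₀def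
  have hδ₀ : 0 < δ₀ := lt_min hξ hζ
  set ρ : ℝ := δ₀ / (4 * κ) with hρdef
  have hρ : 0 < ρ := by positivity
  set r₀ : ℝ := (κ - 1) * ρ / 2 with hr₀def
  have hr₀ : 0 < r₀ := by
    have : 0 < κ - 1 := by linarith
    positivity
  set η₀ : ℝ := κ * ρ with hη₀def
  have hη₀ : 0 < η₀ := by positivity
  have hη₀eq : η₀ = ρ + 2 * r₀ := by rw [hη₀def, hr₀def]; ring
  have hη₀δ : η₀ = δ₀ / 4 := by rw [hη₀def, hρdef]; field_simp
  have hη₀ξ : η₀ < ξ := by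
    rw [hη₀δ]
    have : δ₀ ≤ ξ := min_le_left _ _
    linarith
  have hρξ : ρ < ξ := by
    have h1 : ρ ≤ η₀ := by rw [hη₀eq]; linarith
    linarith
  have h2ρζ : 2 * ρ < ζ := by
    have h1 : 2 * ρ < δ₀ := by
      have h4 : ρ ≤ δ₀ / 4 := by
        rw [hρdef]
        apply div_le_div_of_nonneg_left hδ₀.le (by norm_num) (by linarith)
      linarith
    exact lt_of_lt_of_le h1 (min_le_right _ _)
  have h2η₀ζ : 2 * η₀ < ζ := by
    rw [hη₀δ]
    have : δ₀ ≤ ζ := min_le_right _ _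
    linarith
  have h4r₀ξ : 4 * r₀ < ξ := by
    have h5 : 4 * r₀ = 2 * η₀ - 2 * ρ := by rw [hη₀eq]; ring
    rw [h5, hη₀δ]
    have : δ₀ ≤ ξ := min_le_left _ _
    linarith
  obtain ⟨m₀, hm₀⟩ := uniform_return T ζ κ ξ hκ hξ htrans hexp hpre r₀ hr₀ h4r₀ξ
  refine ⟨η₀, m₀, hη₀, hη₀ξ, ?_⟩
  intro n hn y
  obtain ⟨m, hm, w, hw, hwd⟩ := hm₀ (T^[n] y) y
  have step : ∀ z : X, dist z y ≤ ρ → ∃ z' : X,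
      (T^[m + n] z' = z ∧ dist z' y ≤ ρ) ∧
      ((∀ i ≤ n, dist (T^[i] z') (T^[i] y) ≤ κ⁻¹ ^ (n - i) * η₀) ∧
       (∀ i ≤ m, dist (T^[i] (T^[n] z')) (T^[i] w) ≤ κ⁻¹ ^ (m - i) * ρ)) := by
    intro z hz
    obtain ⟨w', hw', hwb⟩ := shadow T ζ κ hκ hexp ξ hpre ρ hρξ m w z
      (by rw [hw, dist_comm]; exact hz)
    have hww' : dist w w' ≤ ρ := by
      have h6 := hwb 0 (Nat.zero_le m)
      simp only [Function.iterate_zero_apply] at h6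
      calc dist w w' = dist w' w := dist_comm _ _
        _ ≤ κ⁻¹ ^ (m - 0) * ρ := h6
        _ ≤ 1 * ρ := mul_le_mul_of_nonneg_right (pow_le_one₀ hκi0 hκi1.le) hρ.le
        _ = ρ := one_mul _
    have hd2 : dist (T^[n] y) w' ≤ η₀ := by
      calc dist (T^[n] y) w' ≤ dist (T^[n] y) w + dist w w' := dist_triangle _ _ _
        _ ≤ 2 * r₀ + ρ := by
            have : dist (T^[n] y) w < 2 * r₀ := by rw [dist_comm]; exact hwd
            linarith
        _ = η₀ := by rw [hη₀eq]; ring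
    obtain ⟨z', hz', hzb⟩ := shadow T ζ κ hκ hexp ξ hpre η₀ hη₀ξ n y w' hd2
    refine ⟨z', ⟨?_, ?_⟩, ?_, ?_⟩
    · rw [Function.iterate_add_apply, hz', hw']
    · have h7 := hzb 0 (Nat.zero_le n)
      simp only [Function.iterate_zero_apply] at h7
      calc dist z' y ≤ κ⁻¹ ^ (n - 0) * η₀ := h7
        _ ≤ κ⁻¹ ^ 1 * η₀ := by
            apply mul_le_mul_of_nonneg_right _ hη₀.le
            exact pow_le_pow_of_le_one hκi0 hκi1.le (by omega)
        _ = ρ := by rw [pow_one, hη₀def, inv_mul_cancel_left₀ (ne_of_gt hκ0)]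
    · exact hzb
    · intro i hi
      rw [hz']
      exact hwb i hi
  have hycb : y ∈ closedBall y ρ := mem_closedBall_self hρ.le
  haveI hnecb : Nonempty ↥(closedBall y ρ) := ⟨⟨y, hycb⟩⟩
  haveI hcs : CompleteSpace ↥(closedBall y ρ) :=
    isClosed_closedBall.completeSpace_coe
  set F : ↥(closedBall y ρ) → ↥(closedBall y ρ) := fun z =>
    ⟨(step z.1 (mem_closedBall.mp z.2)).choose,
      mem_closedBall.mpr (step z.1 (mem_closedBall.mp z.2)).choose_spec.1.2⟩ with hFdef
  have hlip : ∀ z z' : ↥(closedBall y ρ),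
      dist (F z) (F z') ≤ κ⁻¹ * dist z z' := by
    intro z z'
    have ha := (step z.1 (mem_closedBall.mp z.2)).choose_spec
    have hb := (step z'.1 (mem_closedBall.mp z'.2)).choose_spec
    set a := (step z.1 (mem_closedBall.mp z.2)).choose with hadef
    set b := (step z'.1 (mem_closedBall.mp z'.2)).choose with hbdef
    have aux : ∀ j, j ≤ m + n → κ ^ j * dist a b ≤ dist (T^[j] a) (T^[j] b) := by
      intro j
      induction j with
      | zero => intro _; simp
      | succ j IHj =>
        intro hj
        have hj' : j ≤ m + n := by omega
        have hjlt : dist (T^[j] a) (T^[j] b) < ζ := by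
          rcases le_or_gt j n with hjn | hjn
          · have h1 := ha.2.1 j hjn
            have h2 := hb.2.1 j hjn
            have h3 : κ⁻¹ ^ (n - j) * η₀ ≤ η₀ := by
              calc κ⁻¹ ^ (n - j) * η₀ ≤ 1 * η₀ :=
                    mul_le_mul_of_nonneg_right (pow_le_one₀ hκi0 hκi1.le) hη₀.le
                _ = η₀ := one_mul _
            calc dist (T^[j] a) (T^[j] b)
                ≤ dist (T^[j] a) (T^[j] y) + dist (T^[j] y) (T^[j] b) := dist_triangle _ _ _
              _ ≤ κ⁻¹ ^ (n - j) * η₀ + κ⁻¹ ^ (n - j) * η₀ := by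
                  rw [dist_comm (T^[j] y)]; exact add_le_add h1 h2
              _ ≤ η₀ + η₀ := add_le_add h3 h3
              _ < ζ := by linarith
          · have hi : j - n ≤ m := by omega
            have hrw : ∀ c : X, T^[j] c = T^[j - n] (T^[n] c) := by
              intro c
              rw [← Function.iterate_add_apply]
              congr 1
              omega
            have h3 : κ⁻¹ ^ (m - (j - n)) * ρ ≤ ρ := by
              calc κ⁻¹ ^ (m - (j - n)) * ρ ≤ 1 * ρ :=
                    mul_le_mul_of_nonneg_right (pow_le_one₀ hκi0 hκi1.le) hρ.le
                _ = ρ := one_mul _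
            have e1 : dist (T^[j] a) (T^[j - n] w) ≤ ρ := by
              rw [hrw a]; exact (ha.2.2 (j - n) hi).trans h3
            have e2 : dist (T^[j] b) (T^[j - n] w) ≤ ρ := by
              rw [hrw b]; exact (hb.2.2 (j - n) hi).trans h3
            calc dist (T^[j] a) (T^[j] b)
                ≤ dist (T^[j] a) (T^[j - n] w) + dist (T^[j - n] w) (T^[j] b) :=
                  dist_triangle _ _ _
              _ ≤ ρ + ρ := by
                  rw [dist_comm (T^[j - n] w)]; exact add_le_add e1 e2
              _ < ζ := by linarith
        have hstep := hexp _ _ hjlt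
        rw [← Function.iterate_succ_apply' T j a, ← Function.iterate_succ_apply' T j b] at hstep
        calc κ ^ (j+1) * dist a b = κ * (κ ^ j * dist a b) := by ring
          _ ≤ κ * dist (T^[j] a) (T^[j] b) :=
              mul_le_mul_of_nonneg_left (IHj hj') hκ0.le
          _ ≤ dist (T^[j+1] a) (T^[j+1] b) := hstep
    have hfin := aux (m + n) le_rfl
    rw [ha.1.1, hb.1.1] at hfin
    have hκpow : κ ≤ κ ^ (m + n) := by
      calc κ = κ ^ 1 := (pow_one κ).symm
      _ ≤ κ ^ (m + n) := pow_le_pow_right₀ hκ.le (by omega)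
    have hκd : κ * dist a b ≤ dist z.1 z'.1 := by
      calc κ * dist a b ≤ κ ^ (m + n) * dist a b :=
            mul_le_mul_of_nonneg_right hκpow dist_nonneg
        _ ≤ dist z.1 z'.1 := hfin
    have : dist a b ≤ κ⁻¹ * dist z.1 z'.1 := by
      have h8 := mul_le_mul_of_nonneg_left hκd hκi0
      rwa [← mul_assoc, inv_mul_cancel₀ (ne_of_gt hκ0), one_mul] at h8
    calc dist (F z) (F z') = dist a b := by rw [Subtype.dist_eq]
      _ ≤ κ⁻¹ * dist z.1 z'.1 := this
      _ = κ⁻¹ * dist z z' := by rw [Subtype.dist_eq]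
  have hcontr : ContractingWith (Real.toNNReal κ⁻¹) F := by
    constructor
    · exact_mod_cast Real.toNNReal_lt_one.mpr hκi1
    · apply LipschitzWith.of_dist_le_mul
      intro z z'
      rw [Real.coe_toNNReal κ⁻¹ hκi0]
      exact hlip z z'
  set p' := ContractingWith.fixedPoint F hcontr with hp'def
  have hfix : F p' = p' := hcontr.fixedPoint_isFixedPt
  set p := p'.1 with hpdef
  have hp : dist p y ≤ ρ := mem_closedBall.mp p'.2
  have hchoose : (step p hp).choose = p := by
    have := congrArg Subtype.val hfix
    exact this
  have hs := (step p hp).choose_spec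
  rw [hchoose] at hs
  exact ⟨m, p, hm, hs.1.1, fun i hi => hs.2.1 i (le_of_lt hi)⟩

lemma integrable_of_cont (B : X → ℝ) (hBc : Continuous B) (μ : Measure X)
    [IsFiniteMeasure μ] : Integrable B μ := by
  have h1 : HasCompactSupport B := (isClosed_tsupport B).isCompact
  exact hBc.integrable_of_hasCompactSupport h1

lemma abs_intA_le (B : X → ℝ) (b : ℝ) (hb : ∀ x, |B x| ≤ b)
    (μ : ProbabilityMeasure X) : |intA B μ| ≤ b := by
  have h := norm_integral_le_of_norm_le_const (μ := (μ : Measure X)) (f := B) (C := b)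
    (Filter.Eventually.of_forall (fun x => by simpa using hb x))
  simpa [intA, measure_univ] using h

lemma bddAbove_intA (T : X → X) (B : X → ℝ) (b : ℝ) (hb : ∀ x, |B x| ≤ b) :
    BddAbove (intA B '' MT T) := by
  refine ⟨b, fun t ht => ?_⟩
  obtain ⟨μ, _, rfl⟩ := ht
  exact (abs_le.mp (abs_intA_le B b hb μ)).2

lemma sum_shift {M : Type*} [AddCommMonoid M] (g : ℕ → M) (N : ℕ) (hg : g N = g 0) :
    ∑ i ∈ Finset.range N, g (i + 1) = ∑ i ∈ Finset.range N, g i := by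
  rcases Nat.eq_zero_or_pos N with h | h
  · subst h; simp
  have e1 : ∑ i ∈ Finset.range N, g (i + 1) = ∑ i ∈ Finset.Ico 1 (N + 1), g i := by
    rw [Finset.sum_Ico_eq_sum_range]
    simp only [Nat.add_sub_cancel]
    exact Finset.sum_congr rfl fun i _ => by rw [Nat.add_comm]
  have e2 : ∑ i ∈ Finset.Ico 1 (N + 1), g i = ∑ i ∈ Finset.Ico 1 N, g i + g N :=
    Finset.sum_Ico_succ_top h _
  have e3 : ∑ i ∈ Finset.range N, g i = g 0 + ∑ i ∈ Finset.Ico 1 N, g i := by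
    rw [Finset.range_eq_Ico]
    exact Finset.sum_eq_sum_Ico_succ_bot h _
  rw [e1, e2, e3, hg]
  exact add_comm _ _

lemma periodic_measure (T : X → X) (hTc : Continuous T) (N : ℕ) (hN : 1 ≤ N)
    (p : X) (hp : T^[N] p = p) :
    ∃ μ : ProbabilityMeasure X, μ ∈ MT T ∧
      ∀ B : X → ℝ, Continuous B →
        intA B μ = (N:ℝ)⁻¹ * ∑ i ∈ Finset.range N, B (T^[i] p) := by
  have hTm : Measurable T := hTc.measurable
  set ν : Measure X := ∑ i ∈ Finset.range N, Measure.dirac (T^[i] p) with hνdef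
  set μm : Measure X := ((N : ℝ≥0∞))⁻¹ • ν with hμdef
  have hN0 : (N : ℝ≥0∞) ≠ 0 := Nat.cast_ne_zero.mpr (by omega)
  have hNtop : (N : ℝ≥0∞) ≠ ⊤ := ENNReal.natCast_ne_top N
  have hνuniv : ν univ = N := by
    rw [hνdef, Measure.finset_sum_apply]
    simp [measure_univ]
  haveI hprob : IsProbabilityMeasure μm := by
    constructor
    rw [hμdef, Measure.smul_apply, hνuniv, smul_eq_mul, ENNReal.inv_mul_cancel hN0 hNtop]
  refine ⟨⟨μm, hprob⟩, ?_, ?_⟩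
  · show μm.map T = μm
    have hmap : ν.map T = ν := by
      have h1 : ν.map T = ∑ i ∈ Finset.range N, (Measure.dirac (T^[i] p)).map T := by
        rw [hνdef]
        rw [← Measure.mapₗ_apply_of_measurable hTm]
        rw [map_sum]
        exact Finset.sum_congr rfl fun i _ => by
          rw [Measure.mapₗ_apply_of_measurable hTm]
      rw [h1]
      have h2 : ∀ i, (Measure.dirac (T^[i] p)).map T = Measure.dirac (T^[i+1] p) := by
        intro i
        rw [Measure.map_dirac' hTm, Function.iterate_succ_apply']
      calc ∑ i ∈ Finset.range N, (Measure.dirac (T^[i] p)).map T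
          = ∑ i ∈ Finset.range N, Measure.dirac (T^[i+1] p) :=
            Finset.sum_congr rfl fun i _ => h2 i
        _ = ∑ i ∈ Finset.range N, Measure.dirac (T^[i] p) :=
            sum_shift (fun i => Measure.dirac (T^[i] p)) N (by simpa using congrArg Measure.dirac hp)
        _ = ν := hνdef.symm
    rw [hμdef, Measure.map_smul, hmap]
  · intro B hBc
    show ∫ x, B x ∂μm = (N:ℝ)⁻¹ * ∑ i ∈ Finset.range N, B (T^[i] p)
    rw [hμdef, integral_smul_measure]
    have h3 : ∫ x, B x ∂ν = ∑ i ∈ Finset.range N, B (T^[i] p) := by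
      rw [hνdef, integral_finset_sum_measure (fun i _ => integrable_of_cont B hBc _)]
      exact Finset.sum_congr rfl fun i _ => integral_dirac B (T^[i] p)
    rw [h3, ENNReal.toReal_inv, ENNReal.toReal_natCast, smul_eq_mul]

lemma periodic_birk_le (T : X → X) (hTc : Continuous T) (B : X → ℝ) (hBc : Continuous B)
    (b : ℝ) (hb : ∀ x, |B x| ≤ b) (N : ℕ) (hN : 1 ≤ N) (p : X) (hp : T^[N] p = p) :
    (MT T).Nonempty ∧ ∑ i ∈ Finset.range N, B (T^[i] p) ≤ N * betaConst T B := by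
  obtain ⟨μ, hμ, hint⟩ := periodic_measure T hTc N hN p hp
  refine ⟨⟨μ, hμ⟩, ?_⟩
  have h1 : intA B μ ≤ betaConst T B :=
    le_csSup (bddAbove_intA T B b hb) (mem_image_of_mem _ hμ)
  rw [hint B hBc] at h1
  have hN0 : (0:ℝ) < N := by exact_mod_cast hN
  have h2 := mul_le_mul_of_nonneg_left h1 hN0.le
  rwa [← mul_assoc, mul_inv_cancel₀ hN0.ne', one_mul] at h2

lemma birk_shadow_diff (T : X → X) (κ : ℝ) (hκ : 1 < κ) (θ : ℝ) (hθ0 : 0 < θ)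
    (B : X → ℝ) (Kb : ℝ) (hKb : 0 ≤ Kb)
    (hB : ∀ x y, |B x - B y| ≤ Kb * dist x y ^ θ)
    (n : ℕ) (y z : X) (d : ℝ) (hd : 0 ≤ d)
    (hc : ∀ i < n, dist (T^[i] z) (T^[i] y) ≤ κ⁻¹ ^ (n - i) * d) :
    birk T B n y ≤ birk T B n z + Kb * (d ^ θ * (1 - κ⁻¹ ^ θ)⁻¹) := by
  have hκi0 : (0:ℝ) ≤ κ⁻¹ := by positivity
  have hκi1 : κ⁻¹ < 1 := by rw [inv_lt_one_iff₀]; right; exact hκ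
  have hq0 : (0:ℝ) ≤ κ⁻¹ ^ θ := Real.rpow_nonneg hκi0 θ
  have hq1 : κ⁻¹ ^ θ < 1 := Real.rpow_lt_one hκi0 hκi1 hθ0
  have hdθ : 0 ≤ d ^ θ := Real.rpow_nonneg hd θ
  have key : ∀ i ∈ Finset.range n,
      B (T^[i] y) ≤ B (T^[i] z) + Kb * ((κ⁻¹ ^ θ) ^ (n - i) * d ^ θ) := by
    intro i hi
    have hi' : i < n := Finset.mem_range.mp hi
    have h1 := (abs_le.mp (hB (T^[i] y) (T^[i] z))).2
    have h2 : dist (T^[i] y) (T^[i] z) ^ θ ≤ (κ⁻¹ ^ θ) ^ (n - i) * d ^ θ := by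
      have h3 : dist (T^[i] y) (T^[i] z) ≤ κ⁻¹ ^ (n - i) * d := by
        rw [dist_comm]; exact hc i hi'
      calc dist (T^[i] y) (T^[i] z) ^ θ ≤ (κ⁻¹ ^ (n - i) * d) ^ θ :=
            Real.rpow_le_rpow dist_nonneg h3 hθ0.le
        _ = ((κ⁻¹ ^ (n - i) : ℝ)) ^ θ * d ^ θ :=
            Real.mul_rpow (pow_nonneg hκi0 _) hd
        _ = (κ⁻¹ ^ θ) ^ (n - i) * d ^ θ := by rw [pow_rpow_aux hκi0]
    have h4 : Kb * dist (T^[i] y) (T^[i] z) ^ θ ≤ Kb * ((κ⁻¹ ^ θ) ^ (n - i) * d ^ θ) :=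
      mul_le_mul_of_nonneg_left h2 hKb
    linarith
  have h5 : birk T B n y ≤
      ∑ i ∈ Finset.range n, (B (T^[i] z) + Kb * ((κ⁻¹ ^ θ) ^ (n - i) * d ^ θ)) :=
    Finset.sum_le_sum key
  rw [Finset.sum_add_distrib] at h5
  have h6 : ∑ i ∈ Finset.range n, Kb * ((κ⁻¹ ^ θ) ^ (n - i) * d ^ θ)
      ≤ Kb * (d ^ θ * (1 - κ⁻¹ ^ θ)⁻¹) := by
    have h7 : ∑ i ∈ Finset.range n, Kb * ((κ⁻¹ ^ θ) ^ (n - i) * d ^ θ)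
        = Kb * d ^ θ * ∑ i ∈ Finset.range n, (κ⁻¹ ^ θ) ^ (n - i) := by
      rw [Finset.mul_sum]
      exact Finset.sum_congr rfl fun i _ => by ring
    rw [h7]
    have h8 := geom_aux hq0 hq1 n
    calc Kb * d ^ θ * ∑ i ∈ Finset.range n, (κ⁻¹ ^ θ) ^ (n - i)
        ≤ Kb * d ^ θ * (1 - κ⁻¹ ^ θ)⁻¹ :=
          mul_le_mul_of_nonneg_left h8 (by positivity)
      _ = Kb * (d ^ θ * (1 - κ⁻¹ ^ θ)⁻¹) := by ring
  calc birk T B n y ≤ (∑ i ∈ Finset.range n, B (T^[i] z))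
        + ∑ i ∈ Finset.range n, Kb * ((κ⁻¹ ^ θ) ^ (n - i) * d ^ θ) := h5
    _ ≤ birk T B n z + Kb * (d ^ θ * (1 - κ⁻¹ ^ θ)⁻¹) := by
        rw [birk]; exact add_le_add le_rfl h6

theorem construction (T : X → X) (hTc : Continuous T) (htrans : TopTransitive T)
    (ζ κ : ℝ) (hζ : 0 < ζ) (hκ : 1 < κ)
    (hexp : ∀ x y : X, dist x y < ζ → κ * dist x y ≤ dist (T x) (T y))
    (ξ : ℝ) (hξ : 0 < ξ)
    (hpre : ∀ x' y' x : X, dist x' y' < ξ → T x = x' → ∃ y, T y = y' ∧ dist x y < ζ)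
    (θ : ℝ) (hθ0 : 0 < θ) [Nonempty X] :
    (MT T).Nonempty ∧ ∃ E Q G : ℝ, 0 ≤ E ∧ 0 ≤ Q ∧ 0 ≤ G ∧
      ∀ (B : X → ℝ), Continuous B → ∀ (Kb b : ℝ), 0 ≤ Kb →
        (∀ x y, |B x - B y| ≤ Kb * dist x y ^ θ) →
        (∀ x, |B x| ≤ b) →
        ∃ v : X → ℝ,
          (∀ x : X, B x + v x - v (T x) ≤ betaConst T B) ∧
          (∀ x, 0 ≤ v x ∧ v x ≤ Kb * E + b * Q) ∧
          (∀ x y, dist x y < ξ → |v x - v y| ≤ Kb * G * dist x y ^ θ) := by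
  classical
  have hκi0 : (0:ℝ) ≤ κ⁻¹ := by positivity
  have hκi1 : κ⁻¹ < 1 := by rw [inv_lt_one_iff₀]; right; exact hκ
  have hq0 : (0:ℝ) ≤ κ⁻¹ ^ θ := Real.rpow_nonneg hκi0 θ
  have hq1 : κ⁻¹ ^ θ < 1 := Real.rpow_lt_one hκi0 hκi1 hθ0
  have hσ0 : (0:ℝ) ≤ (1 - κ⁻¹ ^ θ)⁻¹ := by
    have : 0 < 1 - κ⁻¹ ^ θ := by linarith
    positivity
  obtain ⟨η₀, m₀, hη₀, hη₀ξ, hclose⟩ := closing T ζ κ ξ hζ hκ hξ htrans hexp hpre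
  -- a periodic point exists, hence MT is nonempty
  have hMTne : (MT T).Nonempty := by
    obtain ⟨m, p, hm, hTp, _⟩ := hclose 1 le_rfl (Classical.arbitrary X)
    obtain ⟨μ, hμ, _⟩ := periodic_measure T hTc (m + 1) (by omega) p hTp
    exact ⟨μ, hμ⟩
  refine ⟨hMTne, η₀ ^ θ * (1 - κ⁻¹ ^ θ)⁻¹, 2 * m₀, (1 - κ⁻¹ ^ θ)⁻¹,
    mul_nonneg (Real.rpow_nonneg hη₀.le θ) hσ0, by positivity, hσ0, ?_⟩
  intro B hBc Kb b hKb hB hb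
  have hb0 : 0 ≤ b := le_trans (abs_nonneg _) (hb (Classical.arbitrary X))
  set β := betaConst T B with hβdef
  have hβb : β ≤ b := by
    refine csSup_le (hMTne.image _) ?_
    rintro t ⟨μ, hμ, rfl⟩
    exact (abs_le.mp (abs_intA_le B b hb μ)).2
  set S : X → Set ℝ :=
    fun x => {t | ∃ (n : ℕ) (y : X), T^[n] y = x ∧ t = birk T B n y - n * β} with hSdef
  have hS0 : ∀ x, (0:ℝ) ∈ S x := fun x => ⟨0, x, rfl, by simp [birk]⟩
  have chain_bound : ∀ x, ∀ t ∈ S x,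
      t ≤ Kb * (η₀ ^ θ * (1 - κ⁻¹ ^ θ)⁻¹) + b * (2 * m₀) := by
    rintro x t ⟨n, y, hTy, rfl⟩
    have hbig0 : (0:ℝ) ≤ Kb * (η₀ ^ θ * (1 - κ⁻¹ ^ θ)⁻¹) + b * (2 * m₀) := by
      have := Real.rpow_nonneg hη₀.le θ
      positivity
    rcases Nat.eq_zero_or_pos n with hn | hn
    · subst hn
      simpa [birk] using hbig0
    · obtain ⟨m, p, hm, hTp, hpclose⟩ := hclose n hn y
      have hper := periodic_birk_le T hTc B hBc b hb (m + n) (by omega) p hTp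
      have hcB : birk T B n y ≤ birk T B n p + Kb * (η₀ ^ θ * (1 - κ⁻¹ ^ θ)⁻¹) :=
        birk_shadow_diff T κ hκ θ hθ0 B Kb hKb hB n y p η₀ hη₀.le hpclose
      -- split the periodic Birkhoff sum
      have hsplit : ∑ i ∈ Finset.range (m + n), B (T^[i] p)
          = birk T B n p + ∑ i ∈ Finset.range m, B (T^[n + i] p) := by
        rw [add_comm m n, Finset.sum_range_add]
        rfl
      have htail : -((m : ℝ) * b) ≤ ∑ i ∈ Finset.range m, B (T^[n + i] p) := by
        have h1 : ∀ i ∈ Finset.range m, -b ≤ B (T^[n + i] p) := fun i _ =>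
          (abs_le.mp (hb _)).1
        calc -((m : ℝ) * b) = ∑ _i ∈ Finset.range m, (-b) := by
              rw [Finset.sum_const, Finset.card_range]; ring
          _ ≤ ∑ i ∈ Finset.range m, B (T^[n + i] p) := Finset.sum_le_sum h1
      have hbirknp : birk T B n p ≤ (m + n : ℝ) * β + m * b := by
        have h2 := hper.2
        rw [hsplit] at h2
        push_cast at h2 ⊢
        linarith
      have hmβ : (m : ℝ) * β ≤ (m₀ : ℝ) * b := by
        rcases le_or_gt 0 β with hβ0 | hβ0
        · calc (m : ℝ) * β ≤ (m₀ : ℝ) * β := by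
                apply mul_le_mul_of_nonneg_right _ hβ0
                exact_mod_cast hm
            _ ≤ (m₀ : ℝ) * b := mul_le_mul_of_nonneg_left hβb (by positivity)
        · calc (m : ℝ) * β ≤ 0 := mul_nonpos_of_nonneg_of_nonpos (by positivity) hβ0.le
            _ ≤ (m₀ : ℝ) * b := by positivity
      have hmb : (m : ℝ) * b ≤ (m₀ : ℝ) * b := by
        apply mul_le_mul_of_nonneg_right _ hb0
        exact_mod_cast hm
      have : birk T B n y - n * β
          ≤ Kb * (η₀ ^ θ * (1 - κ⁻¹ ^ θ)⁻¹) + ((m:ℝ) * β + (m:ℝ) * b) := by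
        push_cast at hbirknp ⊢
        linarith
      calc birk T B n y - n * β
          ≤ Kb * (η₀ ^ θ * (1 - κ⁻¹ ^ θ)⁻¹) + ((m:ℝ) * β + (m:ℝ) * b) := this
        _ ≤ Kb * (η₀ ^ θ * (1 - κ⁻¹ ^ θ)⁻¹) + b * (2 * m₀) := by
            have := hmβ; have := hmb
            nlinarith [hmβ, hmb]
  have hbdd : ∀ x, BddAbove (S x) := fun x =>
    ⟨Kb * (η₀ ^ θ * (1 - κ⁻¹ ^ θ)⁻¹) + b * (2 * m₀), fun t ht => chain_bound x t ht⟩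
  set v : X → ℝ := fun x => sSup (S x) with hvdef
  have hv0 : ∀ x, 0 ≤ v x := fun x => le_csSup (hbdd x) (hS0 x)
  have hvbound : ∀ x, v x ≤ Kb * (η₀ ^ θ * (1 - κ⁻¹ ^ θ)⁻¹) + b * (2 * m₀) := fun x =>
    csSup_le ⟨0, hS0 x⟩ (chain_bound x)
  have honesided : ∀ x y : X, dist x y < ξ →
      v x ≤ v y + Kb * (1 - κ⁻¹ ^ θ)⁻¹ * dist x y ^ θ := by
    intro x y hxy
    refine csSup_le ⟨0, hS0 x⟩ ?_
    rintro t ⟨n, z, hTz, rfl⟩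
    obtain ⟨z', hTz', hzb⟩ := shadow T ζ κ hκ hexp ξ hpre (dist x y) hxy n z y
      (by rw [hTz])
    have h1 : birk T B n z ≤ birk T B n z'
        + Kb * (dist x y ^ θ * (1 - κ⁻¹ ^ θ)⁻¹) :=
      birk_shadow_diff T κ hκ θ hθ0 B Kb hKb hB n z z' (dist x y) dist_nonneg
        (fun i hi => hzb i hi.le)
    have h2 : birk T B n z' - n * β ≤ v y :=
      le_csSup (hbdd y) ⟨n, z', hTz', rfl⟩
    have : birk T B n z - n * β
        ≤ v y + Kb * (dist x y ^ θ * (1 - κ⁻¹ ^ θ)⁻¹) := by linarith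
    calc birk T B n z - n * β
        ≤ v y + Kb * (dist x y ^ θ * (1 - κ⁻¹ ^ θ)⁻¹) := this
      _ = v y + Kb * (1 - κ⁻¹ ^ θ)⁻¹ * dist x y ^ θ := by ring
  refine ⟨v, ?_, fun x => ⟨hv0 x, hvbound x⟩, ?_⟩
  · intro x
    have hmono : ∀ t ∈ S x, t + (B x - β) ∈ S (T x) := by
      rintro t ⟨n, y, hTy, rfl⟩
      refine ⟨n + 1, y, by rw [Function.iterate_succ_apply', hTy], ?_⟩
      have : birk T B (n + 1) y = birk T B n y + B x := by
        rw [birk, birk, Finset.sum_range_succ, hTy]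
      rw [this]
      push_cast
      ring
    have h4 : ∀ t ∈ S x, t ≤ v (T x) - (B x - β) := by
      intro t ht
      have := le_csSup (hbdd (T x)) (hmono t ht)
      linarith
    have h5 : v x ≤ v (T x) - (B x - β) := csSup_le ⟨0, hS0 x⟩ h4
    linarith
  · intro x y hxy
    have h1 := honesided x y hxy
    have h2 := honesided y x (by rwa [dist_comm])
    rw [dist_comm y x] at h2
    rw [abs_sub_le_iff]
    constructor <;> linarith

lemma equicont_of_modulus {ι : Type*} (f : ι → X → ℝ) (Cb ξ' θ : ℝ) (hξ' : 0 < ξ')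
    (hθ0 : 0 < θ) (hCb : 0 ≤ Cb)
    (h : ∀ i (x y : X), dist x y < ξ' → |f i x - f i y| ≤ Cb * dist x y ^ θ) :
    Equicontinuous f := by
  intro x₀
  rw [Metric.equicontinuousAt_iff]
  intro ε hε
  set ε' := ε / (Cb + 1) with hε'def
  have hε' : 0 < ε' := by positivity
  refine ⟨min ξ' (ε' ^ θ⁻¹), lt_min hξ' (Real.rpow_pos_of_pos hε' _), ?_⟩
  intro y hy i
  have h1 : dist y x₀ < ξ' := lt_of_lt_of_le hy (min_le_left _ _)
  have h2 := h i x₀ y (by rwa [dist_comm])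
  have h3 : dist x₀ y ^ θ ≤ ε' := by
    have h4 : dist x₀ y ≤ ε' ^ θ⁻¹ := by
      rw [dist_comm]
      exact le_trans hy.le (min_le_right _ _)
    calc dist x₀ y ^ θ ≤ (ε' ^ θ⁻¹) ^ θ := Real.rpow_le_rpow dist_nonneg h4 hθ0.le
      _ = ε' := Real.rpow_inv_rpow hε'.le hθ0.ne'
  have h5 : Cb * dist x₀ y ^ θ ≤ Cb * ε' := mul_le_mul_of_nonneg_left h3 hCb
  have h6 : Cb * ε' < ε := by
    rw [hε'def]
    rw [div_eq_mul_inv, ← mul_assoc]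
    have h7 : Cb * ε < (Cb + 1) * ε := by nlinarith
    rw [mul_inv_lt_iff₀ (by positivity)]
    linarith
  have : dist (f i x₀) (f i y) ≤ Cb * dist x₀ y ^ θ := by
    rw [Real.dist_eq]; exact h2
  linarith

lemma beta_close (T : X → X) (B A' : X → ℝ) (hBc : Continuous B) (hAc : Continuous A')
    (bB bA s : ℝ) (hbB : ∀ x, |B x| ≤ bB) (hbA : ∀ x, |A' x| ≤ bA)
    (hs : ∀ x, |B x - A' x| ≤ s) (hne : (MT T).Nonempty) :
    |betaConst T B - betaConst T A'| ≤ s := by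
  have key : ∀ μ : ProbabilityMeasure X, |intA B μ - intA A' μ| ≤ s := by
    intro μ
    have h1 : intA B μ - intA A' μ = ∫ x, (B x - A' x) ∂(μ : Measure X) := by
      rw [intA, intA, ← integral_sub (integrable_of_cont B hBc _)
        (integrable_of_cont A' hAc _)]
    rw [h1]
    have h2 := norm_integral_le_of_norm_le_const (μ := (μ : Measure X))
      (f := fun x => B x - A' x) (C := s)
      (Filter.Eventually.of_forall (fun x => by simpa using hs x))
    simpa [measure_univ] using h2
  have hup : betaConst T B ≤ betaConst T A' + s := by
    refine csSup_le (hne.image _) ?_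
    rintro t ⟨μ, hμ, rfl⟩
    have h3 : intA A' μ ≤ betaConst T A' :=
      le_csSup (bddAbove_intA T A' bA hbA) (mem_image_of_mem _ hμ)
    have := (abs_le.mp (key μ)).2
    linarith
  have hdown : betaConst T A' ≤ betaConst T B + s := by
    refine csSup_le (hne.image _) ?_
    rintro t ⟨μ, hμ, rfl⟩
    have h3 : intA B μ ≤ betaConst T B :=
      le_csSup (bddAbove_intA T B bB hbB) (mem_image_of_mem _ hμ)
    have := (abs_le.mp (key μ)).1
    linarith
  rw [abs_le]
  constructor <;> linarith


end Aux

/-- let `(X,T)` be a transitive, expansive dynamical system with a locally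
constant number of pre-images, and let `B_j` be θ-Hölder functions converging in the
θ-Hölder norm to a potential `A` (i.e. `Höld_θ(B_j - A) → 0` and `‖B_j - A‖₀ → 0`).  Then
one can choose a sub-action `v_j` for each `B_j` so that the sequence `{v_j}` is
equicontinuous and uniformly bounded, and every uniform accumulation point of `{v_j}` is a
sub-action for `A`. -/
theorem stmt18 (T : X → X) (hTc : Continuous T) (htrans : TopTransitive T)
    (ζ κ : ℝ) (hζ : 0 < ζ) (hκ : 1 < κ)
    (hexp : ∀ x y : X, dist x y < ζ → κ * dist x y ≤ dist (T x) (T y))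
    (ξ : ℝ) (hξ : 0 < ξ)
    (hpre : ∀ x' y' x : X, dist x' y' < ξ → T x = x' → ∃ y, T y = y' ∧ dist x y < ζ)
    (θ : ℝ) (hθ0 : 0 < θ) (hθ1 : θ ≤ 1)
    (A : X → ℝ) (KA : ℝ) (hAH : ∀ x y : X, |A x - A y| ≤ KA * dist x y ^ θ)
    (B : ℕ → X → ℝ) (K : ℕ → ℝ)
    (hBH : ∀ j, ∀ x y : X, |B j x - B j y| ≤ K j * dist x y ^ θ)
    (C : ℕ → ℝ) (hC : Tendsto C atTop (𝓝 0))
    (hdiffH : ∀ j, ∀ x y : X, |(B j x - A x) - (B j y - A y)| ≤ C j * dist x y ^ θ)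
    (hsup : Tendsto (fun j => ⨆ x : X, |B j x - A x|) atTop (𝓝 0)) :
    ∃ v : ℕ → X → ℝ,
      (∀ j, Continuous (v j) ∧ IsSubAction T (B j) (v j)) ∧
      Equicontinuous v ∧
      (∃ M : ℝ, ∀ j, ∀ x : X, |v j x| ≤ M) ∧
      ∀ u : X → ℝ, Continuous u →
        (∃ ψ : ℕ → ℕ, StrictMono ψ ∧ TendstoUniformly (fun k => v (ψ k)) u atTop) →
        IsSubAction T A u := by

  rcases isEmpty_or_nonempty X with hX | hX
  · exact ⟨fun _ _ => 0,
      fun j => ⟨continuous_const, fun x => isEmptyElim x⟩,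
      fun x => isEmptyElim x,
      ⟨0, fun j x => isEmptyElim x⟩,
      fun u _ _ x => isEmptyElim x⟩
  obtain ⟨hMTne, E, Q, G, hE, hQ, hG, hcons⟩ :=
    construction T hTc htrans ζ κ hζ hκ hexp ξ hξ hpre θ hθ0
  have hdθ : ∀ x y : X, (0:ℝ) ≤ dist x y ^ θ := fun x y => Real.rpow_nonneg dist_nonneg θ
  -- continuity of A and the B j
  have hKA' : ∀ x y : X, |A x - A y| ≤ max KA 0 * dist x y ^ θ := fun x y =>
    (hAH x y).trans (mul_le_mul_of_nonneg_right (le_max_left _ _) (hdθ x y))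
  have hAc : Continuous A :=
    (equicont_of_modulus (fun _ : Unit => A) (max KA 0) ξ θ hξ hθ0 (le_max_right _ _)
      (fun _ x y _ => hKA' x y)).continuous ()
  have hBc : ∀ j, Continuous (B j) := fun j =>
    (equicont_of_modulus (fun _ : Unit => B j) (max (K j) 0) ξ θ hξ hθ0 (le_max_right _ _)
      (fun _ x y _ => (hBH j x y).trans
        (mul_le_mul_of_nonneg_right (le_max_left _ _) (hdθ x y)))).continuous ()
  -- uniform bound on |A|
  obtain ⟨xA, -, hxA⟩ := isCompact_univ.exists_isMaxOn univ_nonempty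
    (hAc.abs.continuousOn)
  set bA : ℝ := |A xA| with hbAdef
  have hbA : ∀ x : X, |A x| ≤ bA := fun x => hxA (mem_univ x)
  -- the sup-distance sequence
  set s : ℕ → ℝ := fun j => ⨆ x : X, |B j x - A x| with hsdef
  have hdiffc : ∀ j, Continuous fun x : X => |B j x - A x| := fun j => ((hBc j).sub hAc).abs
  have hsle : ∀ j (x : X), |B j x - A x| ≤ s j := fun j x =>
    le_ciSup (isCompact_range (hdiffc j)).bddAbove x
  have hs0 : ∀ j, 0 ≤ s j := fun j =>
    le_trans (abs_nonneg _) (hsle j (Classical.arbitrary X))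
  -- bounds for the sequences C and s
  obtain ⟨Cb, hCb⟩ : ∃ Cb : ℝ, ∀ j, C j ≤ Cb := by
    obtain ⟨Cb, hCb⟩ := hC.bddAbove_range
    exact ⟨Cb, fun j => hCb (mem_range_self j)⟩
  have hsup' : Tendsto s atTop (𝓝 0) := hsup
  obtain ⟨sU, hsU⟩ : ∃ sU : ℝ, ∀ j, s j ≤ sU := by
    obtain ⟨sU, hsU⟩ := hsup'.bddAbove_range
    exact ⟨sU, fun j => hsU (mem_range_self j)⟩
  -- per-index Hölder data
  set Kb : ℕ → ℝ := fun j => max (KA + C j) 0 with hKbdef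
  have hKb0 : ∀ j, 0 ≤ Kb j := fun j => le_max_right _ _
  have hBmod : ∀ j (x y : X), |B j x - B j y| ≤ Kb j * dist x y ^ θ := by
    intro j x y
    have h1 := hdiffH j x y
    have h2 := hAH x y
    have habs : |B j x - B j y| ≤ |(B j x - A x) - (B j y - A y)| + |A x - A y| := by
      have he : B j x - B j y = ((B j x - A x) - (B j y - A y)) + (A x - A y) := by ring
      rw [he]; exact abs_add_le _ _
    have h3 : |B j x - B j y| ≤ (KA + C j) * dist x y ^ θ := by nlinarith [hdθ x y]
    exact h3.trans (mul_le_mul_of_nonneg_right (le_max_left _ _) (hdθ x y))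
  set bb : ℕ → ℝ := fun j => bA + s j with hbbdef
  have hbb : ∀ j (x : X), |B j x| ≤ bb j := by
    intro j x
    have he : |B j x| = |A x + (B j x - A x)| := by congr 1; ring
    calc |B j x| = |A x + (B j x - A x)| := he
      _ ≤ |A x| + |B j x - A x| := abs_add_le _ _
      _ ≤ bA + s j := add_le_add (hbA x) (hsle j x)
  -- apply the construction to every j
  have hv : ∀ j, ∃ v : X → ℝ,
      (∀ x : X, B j x + v x - v (T x) ≤ betaConst T (B j)) ∧
      (∀ x, 0 ≤ v x ∧ v x ≤ Kb j * E + bb j * Q) ∧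
      (∀ x y : X, dist x y < ξ → |v x - v y| ≤ Kb j * G * dist x y ^ θ) := fun j =>
    hcons (B j) (hBc j) (Kb j) (bb j) (hKb0 j) (hBmod j) (hbb j)
  choose v hv1 hv2 hv3 using hv
  -- uniform constants
  set KbU : ℝ := max (KA + Cb) 0 with hKbUdef
  have hKbU0 : 0 ≤ KbU := le_max_right _ _
  have hKbU : ∀ j, Kb j ≤ KbU := fun j => max_le_max (by linarith [hCb j]) le_rfl
  have hbbU : ∀ j, bb j ≤ bA + sU := fun j => add_le_add le_rfl (hsU j)
  set M : ℝ := KbU * E + (bA + sU) * Q with hMdef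
  have hM : ∀ j (x : X), |v j x| ≤ M := by
    intro j x
    rw [abs_of_nonneg (hv2 j x).1]
    calc v j x ≤ Kb j * E + bb j * Q := (hv2 j x).2
      _ ≤ KbU * E + (bA + sU) * Q :=
          add_le_add (mul_le_mul_of_nonneg_right (hKbU j) hE)
            (mul_le_mul_of_nonneg_right (hbbU j) hQ)
  -- equicontinuity
  have hequi : Equicontinuous v := by
    refine equicont_of_modulus v (KbU * G) ξ θ hξ hθ0 (by positivity) ?_
    intro j x y hxy
    refine (hv3 j x y hxy).trans ?_
    exact mul_le_mul_of_nonneg_right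
      (mul_le_mul_of_nonneg_right (hKbU j) hG) (hdθ x y)
  refine ⟨v, fun j => ⟨hequi.continuous j, hv1 j⟩, hequi, ⟨M, hM⟩, ?_⟩
  -- accumulation points are sub-actions for A
  rintro u hu ⟨ψ, hψ, htu⟩ x
  have hβ : ∀ j, betaConst T (B j) ≤ betaConst T A + s j := by
    intro j
    have h := (abs_le.mp (beta_close T (B j) A (hBc j) hAc (bb j) bA (s j) (hbb j) hbA
      (hsle j) hMTne)).2
    linarith
  have hseq : ∀ k, A x + v (ψ k) x - v (ψ k) (T x)
      ≤ betaConst T A + 2 * s (ψ k) := by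
    intro k
    have h1 := hv1 (ψ k) x
    have h2 := (abs_le.mp (hsle (ψ k) x)).1
    have h3 := hβ (ψ k)
    linarith
  have hslim : Tendsto (fun k => s (ψ k)) atTop (𝓝 0) := hsup'.comp hψ.tendsto_atTop
  have hvx : Tendsto (fun k => v (ψ k) x) atTop (𝓝 (u x)) := htu.tendsto_at x
  have hvTx : Tendsto (fun k => v (ψ k) (T x)) atTop (𝓝 (u (T x))) := htu.tendsto_at (T x)
  have hlim : Tendsto (fun k => A x + v (ψ k) x - v (ψ k) (T x) - 2 * s (ψ k)) atTop
      (𝓝 (A x + u x - u (T x) - 2 * 0)) :=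
    Tendsto.sub (Tendsto.sub (tendsto_const_nhds.add hvx) hvTx) (hslim.const_mul 2)
  have hfin : A x + u x - u (T x) - 2 * 0 ≤ betaConst T A :=
    le_of_tendsto hlim (Eventually.of_forall fun k => by
      have hk := hseq k
      linarith)
  linarith
end
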